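/- Let d ≥ 1 and let a ≥ b > 0. There exists a constant C > 0, depending only on a, b and d, such that for all f, g : ℤ^d → ℝ with |f(x)| ≤ ⟨x⟩^{−a} and |g(x)| ≤ ⟨x⟩^{−b} for all x ∈ ℤ^d, the following hold. (i) If a > d, then for every x the convolution (f*g)(x) = Σ_{y∈ℤ^d} f(y)g(x−y) converges absolutely and |(f*g)(x)| ≤ C ⟨x⟩^{−b}. (ii) If a < d and a + b > d, then for every x the convolution converges absolutely and |(f*g)(x)| ≤ C ⟨x⟩^{d−(a+b)}. -/

import Mathlib

open scoped BigOperators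

/-- Euclidean norm of a point of `ℤ^d`. -/
noncomputable def znorm {d : ℕ} (x : Fin d → ℤ) : ℝ :=
  Real.sqrt (∑ i, ((x i : ℝ)) ^ 2)

/-- `⟨x⟩ = max(|x|, 1)`. -/
noncomputable def zbra {d : ℕ} (x : Fin d → ℤ) : ℝ := max (znorm x) 1

namespace Stmt11

variable {d : ℕ}

/-- The sup-norm bracket, as a natural number. -/
def m (y : Fin d → ℤ) : ℕ := max (Finset.univ.sup fun i => (y i).natAbs) 1

lemma one_le_m (y : Fin d → ℤ) : 1 ≤ m y := le_max_right _ _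

lemma m_pos (y : Fin d → ℤ) : 0 < m y := one_le_m y

lemma natAbs_le_m (y : Fin d → ℤ) (i : Fin d) : (y i).natAbs ≤ m y :=
  le_max_of_le_left (Finset.le_sup (f := fun i => (y i).natAbs) (Finset.mem_univ i))

lemma m_le_iff {y : Fin d → ℤ} {n : ℕ} (hn : 1 ≤ n) :
    m y ≤ n ↔ ∀ i, (y i).natAbs ≤ n := by
  constructor
  · intro h i; exact le_trans (natAbs_le_m y i) h
  · intro h
    exact max_le (Finset.sup_le fun i _ => h i) hn

lemma m_triangle (x y : Fin d → ℤ) : m x ≤ m y + m (x - y) := by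
  apply max_le
  · apply Finset.sup_le
    intro i _
    have : x i = y i + (x - y) i := by simp
    rw [this]
    exact le_trans (Int.natAbs_add_le _ _) (add_le_add (natAbs_le_m y i) (natAbs_le_m (x - y) i))
  · have := one_le_m y; omega

lemma m_le_zbra (hd : 1 ≤ d) (y : Fin d → ℤ) : (m y : ℝ) ≤ zbra y := by
  have hne : (Finset.univ : Finset (Fin d)).Nonempty := by
    refine Finset.univ_nonempty_iff.mpr ?_
    exact Fin.pos_iff_nonempty.mp hd
  obtain ⟨i₀, -, hi₀⟩ := Finset.exists_mem_eq_sup Finset.univ hne fun i => (y i).natAbs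
  have h1 : (((y i₀).natAbs : ℝ)) ≤ znorm y := by
    have : |(y i₀ : ℝ)| ≤ znorm y := by
      rw [znorm, ← Real.sqrt_sq_eq_abs]
      apply Real.sqrt_le_sqrt
      exact Finset.single_le_sum (f := fun i => ((y i : ℝ)) ^ 2)
        (fun i _ => sq_nonneg _) (Finset.mem_univ i₀)
    rwa [show |(y i₀ : ℝ)| = (((y i₀).natAbs : ℝ)) by push_cast [Nat.cast_natAbs]; ring] at this
  have : (m y : ℝ) = max (((y i₀).natAbs : ℝ)) 1 := by
    rw [m, hi₀, Nat.cast_max]; norm_num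
  rw [this, zbra]
  exact max_le_max h1 le_rfl

lemma zbra_le_m (hd : 1 ≤ d) (y : Fin d → ℤ) : zbra y ≤ Real.sqrt d * m y := by
  have hm1 : (1 : ℝ) ≤ (m y : ℝ) := by exact_mod_cast one_le_m y
  have hd1 : (1 : ℝ) ≤ Real.sqrt d := by
    rw [show (1:ℝ) = Real.sqrt 1 by simp]
    apply Real.sqrt_le_sqrt; exact_mod_cast hd
  apply max_le
  · rw [znorm]
    have hsum : (∑ i, ((y i : ℝ)) ^ 2) ≤ (d : ℝ) * (m y : ℝ) ^ 2 := by
      calc (∑ i, ((y i : ℝ)) ^ 2) ≤ ∑ _i : Fin d, ((m y : ℝ)) ^ 2 := by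
            apply Finset.sum_le_sum
            intro i _
            have h0 : (y i).natAbs ≤ m y := natAbs_le_m y i
            have : |(y i : ℝ)| ≤ (m y : ℝ) := by
              rw [show |(y i : ℝ)| = (((y i).natAbs : ℝ)) by push_cast [Nat.cast_natAbs]; ring]
              exact_mod_cast h0
            calc ((y i : ℝ)) ^ 2 = |(y i : ℝ)| ^ 2 := (sq_abs _).symm
              _ ≤ (m y : ℝ) ^ 2 := pow_le_pow_left₀ (abs_nonneg _) this 2
        _ = (d : ℝ) * (m y : ℝ) ^ 2 := by simp [Finset.sum_const, mul_comm]
    calc Real.sqrt (∑ i, ((y i : ℝ)) ^ 2) ≤ Real.sqrt ((d : ℝ) * (m y : ℝ) ^ 2) :=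
          Real.sqrt_le_sqrt hsum
      _ = Real.sqrt d * m y := by
          rw [Real.sqrt_mul (by positivity)]
          congr 1
          exact Real.sqrt_sq (by positivity)
  · nlinarith

/-- The box of sup-norm radius `n`. -/
noncomputable def box (d n : ℕ) : Finset (Fin d → ℤ) :=
  Fintype.piFinset fun _ => Finset.Icc (-(n : ℤ)) n

lemma mem_box {n : ℕ} {y : Fin d → ℤ} : y ∈ box d n ↔ ∀ i, (y i).natAbs ≤ n := by
  simp only [box, Fintype.mem_piFinset, Finset.mem_Icc]
  constructor <;> intro h i <;> have := h i <;> omega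

lemma mem_box_m {n : ℕ} (hn : 1 ≤ n) {y : Fin d → ℤ} : y ∈ box d n ↔ m y ≤ n := by
  rw [mem_box, m_le_iff hn]

lemma card_box (n : ℕ) : (box d n).card = (2 * n + 1) ^ d := by
  rw [box, Fintype.card_piFinset]
  have : (Finset.Icc (-(n:ℤ)) n).card = 2 * n + 1 := by
    rw [Int.card_Icc]; omega
  simp [this]

lemma box_subset {n k : ℕ} (h : n ≤ k) : box d n ⊆ box d k := by
  intro y hy
  rw [mem_box] at hy ⊢
  exact fun i => le_trans (hy i) h

end Stmt11

namespace Stmt11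

variable {d : ℕ}

lemma card_fiber_le (hd : 1 ≤ d) (n : ℕ) (hn : 1 ≤ n) (u : Finset (Fin d → ℤ)) :
    ((u.filter fun y => m y = n).card : ℝ) ≤ (2 * d * 3 ^ d : ℝ) * (n : ℝ) ^ (d - 1) := by
  classical
  have hd' : (1:ℝ) ≤ (d:ℝ) := by exact_mod_cast hd
  have hn' : (1:ℝ) ≤ (n:ℝ) := by exact_mod_cast hn
  have hnpow : (1:ℝ) ≤ (n:ℝ) ^ (d-1) := one_le_pow₀ hn'
  rcases eq_or_lt_of_le hn with h1 | h2
  · -- n = 1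
    have hsub : (u.filter fun y => m y = n) ⊆ box d 1 := by
      intro y hy
      rw [Finset.mem_filter] at hy
      rw [mem_box_m le_rfl]
      omega
    have := Finset.card_le_card hsub
    rw [card_box] at this
    calc ((u.filter fun y => m y = n).card : ℝ) ≤ ((2 * 1 + 1) ^ d : ℕ) := by exact_mod_cast this
      _ = (3:ℝ) ^ d := by norm_num
      _ ≤ (2 * d * 3 ^ d : ℝ) * (n:ℝ) ^ (d-1) := by
          have e1 : (3:ℝ) ^ d ≤ 2 * d * 3 ^ d := by
            nlinarith [pow_pos (by norm_num : (0:ℝ) < 3) d]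
          exact le_trans e1 (le_mul_of_one_le_right (by positivity) hnpow)
  · -- n ≥ 2
    have hn2 : 2 ≤ n := h2
    have hsub : (u.filter fun y => m y = n) ⊆ box d n \ box d (n - 1) := by
      intro y hy
      rw [Finset.mem_filter] at hy
      rw [Finset.mem_sdiff]
      constructor
      · exact (mem_box_m hn).mpr (by omega)
      · intro hc
        have := (mem_box_m (by omega : 1 ≤ n - 1)).mp hc
        omega
    have hcard : (box d n \ box d (n-1)).card = (2*n+1)^d - (2*(n-1)+1)^d := by
      rw [Finset.card_sdiff_of_subset (box_subset (by omega)), card_box, card_box]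
    have hle : (2*(n-1)+1)^d ≤ (2*n+1)^d := Nat.pow_le_pow_left (by omega) d
    have key : ((box d n \ box d (n-1)).card : ℝ) ≤ (2 * d * 3 ^ d : ℝ) * (n:ℝ) ^ (d-1) := by
      rw [hcard, Nat.cast_sub hle]
      push_cast [Nat.cast_sub hn]
      set x : ℝ := 2*(n:ℝ)+1 with hx
      set y : ℝ := 2*((n:ℝ)-1)+1 with hy
      have hxy : x - y = 2 := by rw [hx, hy]; ring
      have hy0 : 0 ≤ y := by rw [hy]; nlinarith
      have hyx : y ≤ x := by rw [hx, hy]; nlinarith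
      have hgeom := geom_sum₂_mul x y d
      have hterm : ∀ i ∈ Finset.range d, x ^ i * y ^ (d - 1 - i) ≤ x ^ (d-1) := by
        intro i hi
        rw [Finset.mem_range] at hi
        calc x ^ i * y ^ (d-1-i) ≤ x ^ i * x ^ (d-1-i) := by
              apply mul_le_mul_of_nonneg_left (pow_le_pow_left₀ hy0 hyx _) (by positivity)
          _ = x ^ (d-1) := by rw [← pow_add]; congr 1; omega
      have hsum : (∑ i ∈ Finset.range d, x ^ i * y ^ (d - 1 - i)) ≤ (d:ℝ) * x ^ (d-1) := by
        calc (∑ i ∈ Finset.range d, x ^ i * y ^ (d - 1 - i)) ≤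
            ∑ _i ∈ Finset.range d, x ^ (d-1) := Finset.sum_le_sum hterm
          _ = (d:ℝ) * x ^ (d-1) := by simp [Finset.sum_const, mul_comm]
      have hxle : x ≤ 3 * (n:ℝ) := by rw [hx]; nlinarith
      have hxpow : x ^ (d-1) ≤ (3:ℝ)^(d-1) * (n:ℝ)^(d-1) := by
        rw [← mul_pow]
        exact pow_le_pow_left₀ (by positivity) hxle _
      have h3 : (3:ℝ)^(d-1) ≤ (3:ℝ)^d := pow_le_pow_right₀ (by norm_num) (by omega)
      calc (2*(n:ℝ)+1)^d - (2*((n:ℝ)-1)+1)^d = x^d - y^d := by rw [hx, hy]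
        _ = (∑ i ∈ Finset.range d, x ^ i * y ^ (d - 1 - i)) * (x - y) := (geom_sum₂_mul x y d).symm
        _ = (∑ i ∈ Finset.range d, x ^ i * y ^ (d - 1 - i)) * 2 := by rw [hxy]
        _ ≤ ((d:ℝ) * x ^ (d-1)) * 2 := by
            apply mul_le_mul_of_nonneg_right hsum (by norm_num)
        _ ≤ ((d:ℝ) * ((3:ℝ)^(d-1) * (n:ℝ)^(d-1))) * 2 := by
            apply mul_le_mul_of_nonneg_right _ (by norm_num)
            exact mul_le_mul_of_nonneg_left hxpow (by positivity)
        _ ≤ ((d:ℝ) * ((3:ℝ)^d * (n:ℝ)^(d-1))) * 2 := by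
            have h4 : (0:ℝ) ≤ (n:ℝ)^(d-1) := by positivity
            apply mul_le_mul_of_nonneg_right _ (by norm_num)
            apply mul_le_mul_of_nonneg_left _ (by positivity)
            exact mul_le_mul_of_nonneg_right h3 h4
        _ = (2 * d * 3 ^ d : ℝ) * (n:ℝ) ^ (d-1) := by ring
    calc ((u.filter fun y => m y = n).card : ℝ) ≤ ((box d n \ box d (n-1)).card : ℝ) := by
          exact_mod_cast Finset.card_le_card hsub
      _ ≤ _ := key

/-- Master lemma: bounds over arbitrary finite sets reduce to 1-d weighted sums. -/
lemma master (hd : 1 ≤ d) (F : ℕ → ℝ) (hF : ∀ n, 0 ≤ F n) {B : ℝ}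
    (hB : ∀ N : ℕ, 1 ≤ N →
      (2 * (d:ℝ) * 3 ^ d) * ∑ n ∈ Finset.Icc 1 N, (n : ℝ) ^ (d - 1) * F n ≤ B) :
    ∀ u : Finset (Fin d → ℤ), ∑ y ∈ u, F (m y) ≤ B := by
  classical
  intro u
  set N : ℕ := max 1 (u.sup m) with hN
  have hN1 : 1 ≤ N := le_max_left _ _
  have hsub : u ⊆ box d N := by
    intro y hy
    rw [mem_box_m hN1]
    exact le_trans (Finset.le_sup hy) (le_max_right _ _)
  have h1 : ∑ y ∈ u, F (m y) ≤ ∑ y ∈ box d N, F (m y) :=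
    Finset.sum_le_sum_of_subset_of_nonneg hsub (fun y _ _ => hF _)
  have hmaps : ∀ y ∈ box d N, m y ∈ Finset.Icc 1 N := by
    intro y hy
    rw [Finset.mem_Icc]
    exact ⟨one_le_m y, (mem_box_m hN1).mp hy⟩
  have h2 : ∑ y ∈ box d N, F (m y) =
      ∑ n ∈ Finset.Icc 1 N, ∑ y ∈ (box d N).filter (fun y => m y = n), F (m y) :=
    (Finset.sum_fiberwise_of_maps_to hmaps _).symm
  have h3 : ∀ n ∈ Finset.Icc 1 N,
      ∑ y ∈ (box d N).filter (fun y => m y = n), F (m y) ≤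
        (2 * (d:ℝ) * 3 ^ d) * ((n : ℝ) ^ (d - 1) * F n) := by
    intro n hn
    rw [Finset.mem_Icc] at hn
    have : ∑ y ∈ (box d N).filter (fun y => m y = n), F (m y) =
        (((box d N).filter (fun y => m y = n)).card : ℝ) * F n := by
      have e : ∑ y ∈ (box d N).filter (fun y => m y = n), F (m y) =
          ∑ _y ∈ (box d N).filter (fun y => m y = n), F n :=
        Finset.sum_congr rfl (fun y hy => by rw [(Finset.mem_filter.mp hy).2])
      rw [e, Finset.sum_const, nsmul_eq_mul]
    rw [this]
    calc (((box d N).filter (fun y => m y = n)).card : ℝ) * F n ≤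
        ((2 * d * 3 ^ d : ℝ) * (n : ℝ) ^ (d - 1)) * F n :=
          mul_le_mul_of_nonneg_right (card_fiber_le hd n hn.1 _) (hF n)
      _ = (2 * (d:ℝ) * 3 ^ d) * ((n : ℝ) ^ (d - 1) * F n) := by ring
  calc ∑ y ∈ u, F (m y) ≤ ∑ y ∈ box d N, F (m y) := h1
    _ = _ := h2
    _ ≤ ∑ n ∈ Finset.Icc 1 N, (2 * (d:ℝ) * 3 ^ d) * ((n : ℝ) ^ (d - 1) * F n) :=
        Finset.sum_le_sum h3
    _ = (2 * (d:ℝ) * 3 ^ d) * ∑ n ∈ Finset.Icc 1 N, (n : ℝ) ^ (d - 1) * F n := by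
        rw [Finset.mul_sum]
    _ ≤ B := hB N hN1

lemma master_tsum (hd : 1 ≤ d) (F : ℕ → ℝ) (hF : ∀ n, 0 ≤ F n) {B : ℝ}
    (hB : ∀ N : ℕ, 1 ≤ N →
      (2 * (d:ℝ) * 3 ^ d) * ∑ n ∈ Finset.Icc 1 N, (n : ℝ) ^ (d - 1) * F n ≤ B) :
    Summable (fun y : Fin d → ℤ => F (m y)) ∧ (∑' y : Fin d → ℤ, F (m y)) ≤ B := by
  have hs : Summable (fun y : Fin d → ℤ => F (m y)) :=
    summable_of_sum_le (fun y => hF _) (master hd F hF hB)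
  exact ⟨hs, Summable.tsum_le_of_sum_le hs (master hd F hF hB)⟩

end Stmt11

namespace Stmt11

/-- Bernoulli's inequality for nonpositive exponents and base in `(0,1]`. -/
lemma bernoulli_neg {u : ℝ} (hu0 : 0 < u) (hu1 : u ≤ 1) {p : ℝ} (hp : p ≤ 0) :
    1 + p * (u - 1) ≤ u ^ p := by
  have hup : 0 < u ^ p := Real.rpow_pos_of_pos hu0 p
  rcases le_or_gt 1 (-p) with h1 | h1
  · set s : ℝ := (1 - u) / u with hs
    have hs0 : 0 ≤ s := div_nonneg (by linarith) hu0.le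
    have key := one_add_mul_self_le_rpow_one_add (s := s) (by linarith) h1
    have h1s : 1 + s = 1 / u := by rw [hs]; field_simp; ring
    rw [h1s] at key
    have hru : (1 / u) ^ (-p) = u ^ p := by
      rw [one_div, Real.inv_rpow hu0.le, ← Real.rpow_neg hu0.le, neg_neg]
    rw [hru] at key
    have hs2 : (1 - u) ≤ s := by
      rw [hs, le_div_iff₀ hu0]; nlinarith
    nlinarith
  · -- 0 ≤ -p < 1
    have hp0 : 0 ≤ -p := by linarith
    have key := rpow_one_add_le_one_add_mul_self (s := u - 1) (by linarith) hp0 h1.le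
    rw [show 1 + (u - 1) = u by ring] at key
    set t : ℝ := (-p) * (1 - u) with ht
    have ht0 : 0 ≤ t := by apply mul_nonneg hp0; linarith
    have ht1 : t < 1 := by
      calc t ≤ (-p) * 1 := by apply mul_le_mul_of_nonneg_left (by linarith) hp0
        _ < 1 := by linarith
    have hkey2 : u ^ (-p) ≤ 1 - t := by rw [ht]; nlinarith [key]
    have hinv : u ^ p = (u ^ (-p))⁻¹ := by
      rw [← Real.rpow_neg hu0.le, neg_neg]
    have hpos : 0 < u ^ (-p) := Real.rpow_pos_of_pos hu0 _
    have h5 : (1 - t)⁻¹ ≤ (u ^ (-p))⁻¹ := inv_anti₀ hpos hkey2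
    have h3 : 1 + t ≤ (1 - t)⁻¹ := by
      have hc := mul_inv_cancel₀ (show (1:ℝ) - t ≠ 0 by linarith)
      have hip : 0 < (1 - t)⁻¹ := inv_pos.mpr (by linarith)
      nlinarith [sq_nonneg t]
    calc 1 + p * (u - 1) = 1 + t := by rw [ht]; ring
      _ ≤ (1 - t)⁻¹ := h3
      _ ≤ (u ^ (-p))⁻¹ := h5
      _ = u ^ p := hinv.symm

lemma step_up {r : ℝ} (hr0 : 0 < r) (hr1 : r ≤ 1) {n : ℕ} (hn : 1 ≤ n) :
    r * (n:ℝ) ^ (r - 1) ≤ (n:ℝ) ^ r - ((n:ℝ) - 1) ^ r := by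
  have ht : (1:ℝ) ≤ (n:ℝ) := by exact_mod_cast hn
  have ht0 : (0:ℝ) < (n:ℝ) := by linarith
  set s : ℝ := -1 / (n:ℝ) with hs
  have hs1 : -1 ≤ s := by
    rw [hs, neg_div]
    have : 1 / (n:ℝ) ≤ 1 := by rw [div_le_one ht0]; exact ht
    linarith
  have h1s : 0 ≤ 1 + s := by
    rw [hs, neg_div]
    have : 1 / (n:ℝ) ≤ 1 := by rw [div_le_one ht0]; exact ht
    linarith
  have key := rpow_one_add_le_one_add_mul_self hs1 hr0.le hr1
  have hmul : (n:ℝ) * (1 + s) = (n:ℝ) - 1 := by rw [hs]; field_simp; ring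
  have e1 : ((n:ℝ) - 1) ^ r ≤ (n:ℝ) ^ r * (1 + r * s) := by
    calc ((n:ℝ) - 1) ^ r = ((n:ℝ) * (1 + s)) ^ r := by rw [hmul]
      _ = (n:ℝ) ^ r * (1 + s) ^ r := Real.mul_rpow ht0.le h1s
      _ ≤ (n:ℝ) ^ r * (1 + r * s) := by
          apply mul_le_mul_of_nonneg_left key (Real.rpow_nonneg ht0.le r)
  have e2 : (n:ℝ) ^ r * (1 + r * s) = (n:ℝ) ^ r - r * (n:ℝ) ^ (r - 1) := by
    rw [Real.rpow_sub ht0, Real.rpow_one, hs]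
    field_simp
    ring
  linarith [e1, e2.symm.le, e2.le]

lemma step_down {r : ℝ} (hr : r < 0) {n : ℕ} (hn : 2 ≤ n) :
    (-r) * (n:ℝ) ^ (r - 1) ≤ ((n:ℝ) - 1) ^ r - (n:ℝ) ^ r := by
  have ht : (2:ℝ) ≤ (n:ℝ) := by exact_mod_cast hn
  have ht0 : (0:ℝ) < (n:ℝ) := by linarith
  set u : ℝ := ((n:ℝ) - 1) / (n:ℝ) with hu
  have hu0 : 0 < u := by rw [hu]; apply div_pos (by linarith) ht0
  have hu1 : u ≤ 1 := by rw [hu, div_le_one ht0]; linarith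
  have key := bernoulli_neg hu0 hu1 hr.le
  have hum : u - 1 = -1 / (n:ℝ) := by rw [hu]; field_simp; ring
  have hmul : (n:ℝ) * u = (n:ℝ) - 1 := by rw [hu]; field_simp
  have e1 : (n:ℝ) ^ r * (1 + r * (u - 1)) ≤ ((n:ℝ) - 1) ^ r := by
    calc (n:ℝ) ^ r * (1 + r * (u - 1)) ≤ (n:ℝ) ^ r * u ^ r := by
          apply mul_le_mul_of_nonneg_left key (Real.rpow_nonneg ht0.le r)
      _ = ((n:ℝ) * u) ^ r := (Real.mul_rpow ht0.le hu0.le).symm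
      _ = ((n:ℝ) - 1) ^ r := by rw [hmul]
  have e2 : (n:ℝ) ^ r * (1 + r * (u - 1)) = (n:ℝ) ^ r + (-r) * (n:ℝ) ^ (r - 1) := by
    rw [hum, Real.rpow_sub ht0, Real.rpow_one]
    field_simp
  linarith [e1, e2.le, e2.symm.le]

lemma sum_up {r : ℝ} (hr0 : 0 < r) (hr1 : r ≤ 1) (N : ℕ) :
    ∑ n ∈ Finset.Icc 1 N, (n:ℝ) ^ (r - 1) ≤ (N:ℝ) ^ r / r := by
  have key : r * ∑ n ∈ Finset.Icc 1 N, (n:ℝ) ^ (r - 1) ≤ (N:ℝ) ^ r := by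
    rw [Finset.mul_sum]
    have h1 : ∑ n ∈ Finset.Icc 1 N, r * (n:ℝ) ^ (r - 1) ≤
        ∑ n ∈ Finset.Icc 1 N, ((n:ℝ) ^ r - ((n:ℝ) - 1) ^ r) := by
      apply Finset.sum_le_sum
      intro n hn
      rw [Finset.mem_Icc] at hn
      exact step_up hr0 hr1 hn.1
    have h2 : ∑ n ∈ Finset.Icc 1 N, ((n:ℝ) ^ r - ((n:ℝ) - 1) ^ r) = (N:ℝ) ^ r - 0 ^ r := by
      rw [← Finset.Ico_add_one_right_eq_Icc, Finset.sum_Ico_eq_sum_range]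
      have e : ∀ i : ℕ, (((1 + i : ℕ):ℝ)) ^ r - (((1 + i : ℕ):ℝ) - 1) ^ r =
          (fun k : ℕ => ((k:ℝ)) ^ r) (i + 1) - (fun k : ℕ => ((k:ℝ)) ^ r) i := by
        intro i; push_cast; ring_nf
      calc ∑ i ∈ Finset.range (N + 1 - 1), ((((1 + i : ℕ)):ℝ) ^ r - (((1 + i : ℕ):ℝ) - 1) ^ r)
          = ∑ i ∈ Finset.range N, ((fun k : ℕ => ((k:ℝ)) ^ r) (i + 1) - (fun k : ℕ => ((k:ℝ)) ^ r) i) := by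
            rw [show N + 1 - 1 = N by omega]
            exact Finset.sum_congr rfl fun i _ => e i
        _ = (N:ℝ) ^ r - ((0:ℕ):ℝ) ^ r := Finset.sum_range_sub (fun k : ℕ => ((k:ℝ)) ^ r) N
        _ = (N:ℝ) ^ r - 0 ^ r := by norm_num
    rw [Real.zero_rpow hr0.ne'] at h2
    calc ∑ n ∈ Finset.Icc 1 N, r * (n:ℝ) ^ (r - 1) ≤ (N:ℝ) ^ r - 0 := by rw [← h2] at *; linarith [h1]
      _ = (N:ℝ) ^ r := by ring
  rw [le_div_iff₀ hr0]
  linarith [key]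

lemma sum_down {r : ℝ} (hr : r < 0) (M N : ℕ) (hM : 1 ≤ M) :
    ∑ n ∈ Finset.Icc M N, (n:ℝ) ^ (r - 1) ≤ (1 + 1 / (-r)) * (M:ℝ) ^ r := by
  have hM0 : (0:ℝ) < (M:ℝ) := by exact_mod_cast hM
  have hM1 : (1:ℝ) ≤ (M:ℝ) := by exact_mod_cast hM
  have hMr : 0 < (M:ℝ) ^ r := Real.rpow_pos_of_pos hM0 r
  have hrpos : 0 < -r := by linarith
  rcases lt_or_ge N M with hNM | hMN
  · rw [Finset.Icc_eq_empty (by omega)]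
    simp only [Finset.sum_empty]
    positivity
  · have hsplit : Finset.Icc M N = insert M (Finset.Icc (M + 1) N) := by
      ext k; simp only [Finset.mem_Icc, Finset.mem_insert]; omega
    have hnotmem : M ∉ Finset.Icc (M + 1) N := by simp only [Finset.mem_Icc]; omega
    rw [hsplit, Finset.sum_insert hnotmem]
    have hfirst : (M:ℝ) ^ (r - 1) ≤ (M:ℝ) ^ r :=
      Real.rpow_le_rpow_of_exponent_le hM1 (by linarith)
    have hsecond : ∑ n ∈ Finset.Icc (M + 1) N, (n:ℝ) ^ (r - 1) ≤ (M:ℝ) ^ r / (-r) := by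
      set G : ℕ → ℝ := fun k => (((M + k : ℕ)):ℝ) ^ r with hG
      have key : (-r) * ∑ n ∈ Finset.Icc (M + 1) N, (n:ℝ) ^ (r - 1) ≤ (M:ℝ) ^ r := by
        rw [Finset.mul_sum]
        have h1 : ∑ n ∈ Finset.Icc (M + 1) N, (-r) * (n:ℝ) ^ (r - 1) ≤
            ∑ n ∈ Finset.Icc (M + 1) N, (((n:ℝ) - 1) ^ r - (n:ℝ) ^ r) := by
          apply Finset.sum_le_sum
          intro n hn
          rw [Finset.mem_Icc] at hn
          exact step_down hr (by omega)
        have h2 : ∑ n ∈ Finset.Icc (M + 1) N, (((n:ℝ) - 1) ^ r - (n:ℝ) ^ r) =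
            G 0 - G (N + 1 - (M + 1)) := by
          rw [← Finset.Ico_add_one_right_eq_Icc, Finset.sum_Ico_eq_sum_range]
          have e : ∀ i : ℕ, (((M + 1 + i : ℕ):ℝ) - 1) ^ r - ((M + 1 + i : ℕ):ℝ) ^ r =
              G i - G (i + 1) := by
            intro i
            have c1 : ((M + 1 + i : ℕ):ℝ) - 1 = ((M + i : ℕ):ℝ) := by push_cast; ring
            have c2 : (M + 1 + i : ℕ) = (M + (i + 1) : ℕ) := by omega
            rw [hG]
            simp only []
            rw [c1, c2]
          rw [Finset.sum_congr rfl (fun i _ => e i)]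
          exact Finset.sum_range_sub' G (N + 1 - (M + 1))
        have hG0 : G 0 = (M:ℝ) ^ r := by rw [hG]; norm_num
        have hGnn : 0 ≤ G (N + 1 - (M + 1)) := Real.rpow_nonneg (by positivity) r
        calc ∑ n ∈ Finset.Icc (M + 1) N, (-r) * (n:ℝ) ^ (r - 1)
            ≤ G 0 - G (N + 1 - (M + 1)) := le_trans h1 h2.le
          _ ≤ (M:ℝ) ^ r := by rw [hG0] at *; linarith
      rw [le_div_iff₀ hrpos]
      linarith [key]
    have : (M:ℝ) ^ r + (M:ℝ) ^ r / (-r) = (1 + 1 / (-r)) * (M:ℝ) ^ r := by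
      rw [add_mul, one_mul, div_mul_eq_mul_div, one_mul]
    linarith [hfirst, hsecond]

lemma sum_box {r : ℝ} (hr0 : 0 < r) (R : ℕ) (hR : 1 ≤ R) :
    ∑ n ∈ Finset.Icc 1 (R - 1), (n:ℝ) ^ (r - 1) ≤ max 1 (1 / r) * (R:ℝ) ^ r := by
  have hR0 : (0:ℝ) < (R:ℝ) := by exact_mod_cast hR
  have hRr : 0 < (R:ℝ) ^ r := Real.rpow_pos_of_pos hR0 r
  rcases le_or_gt r 1 with hr1 | hr1
  · calc ∑ n ∈ Finset.Icc 1 (R - 1), (n:ℝ) ^ (r - 1) ≤ ((R - 1 : ℕ):ℝ) ^ r / r :=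
        sum_up hr0 hr1 (R - 1)
      _ ≤ (R:ℝ) ^ r / r := by
          apply div_le_div_of_nonneg_right ?_ hr0.le
          apply Real.rpow_le_rpow (by positivity) ?_ hr0.le
          exact_mod_cast (by omega : R - 1 ≤ R)
      _ ≤ max 1 (1 / r) * (R:ℝ) ^ r := by
          rw [div_eq_mul_inv, mul_comm]
          apply mul_le_mul_of_nonneg_right ?_ hRr.le
          rw [← one_div]
          exact le_max_right _ _
  · -- 1 < r
    have hterm : ∀ n ∈ Finset.Icc 1 (R - 1), (n:ℝ) ^ (r - 1) ≤ (R:ℝ) ^ (r - 1) := by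
      intro n hn
      rw [Finset.mem_Icc] at hn
      apply Real.rpow_le_rpow (by positivity) ?_ (by linarith)
      exact_mod_cast (by omega : n ≤ R)
    calc ∑ n ∈ Finset.Icc 1 (R - 1), (n:ℝ) ^ (r - 1)
        ≤ (Finset.Icc 1 (R - 1)).card • ((R:ℝ) ^ (r - 1)) :=
          Finset.sum_le_card_nsmul _ _ _ hterm
      _ = ((R - 1 : ℕ):ℝ) * (R:ℝ) ^ (r - 1) := by
          rw [Nat.card_Icc, nsmul_eq_mul]
          norm_num
      _ ≤ (R:ℝ) * (R:ℝ) ^ (r - 1) := by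
          apply mul_le_mul_of_nonneg_right ?_ (Real.rpow_nonneg hR0.le _)
          exact_mod_cast (by omega : R - 1 ≤ R)
      _ = (R:ℝ) ^ r := by
          rw [Real.rpow_sub hR0, Real.rpow_one]
          field_simp
      _ ≤ max 1 (1 / r) * (R:ℝ) ^ r := by
          nth_rewrite 1 [← one_mul ((R:ℝ) ^ r)]
          exact mul_le_mul_of_nonneg_right (le_max_left _ _) hRr.le

end Stmt11

namespace Stmt11

variable {d : ℕ}

lemma pow_mul_rpow (hd : 1 ≤ d) {n : ℕ} (hn : 1 ≤ n) (s : ℝ) :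
    (n:ℝ) ^ (d - 1) * (n:ℝ) ^ (-s) = (n:ℝ) ^ (((d:ℝ) - s) - 1) := by
  have hn0 : (0:ℝ) < (n:ℝ) := by exact_mod_cast hn
  rw [← Real.rpow_natCast (n:ℝ) (d - 1), ← Real.rpow_add hn0]
  congr 1
  rw [Nat.cast_sub hd]
  push_cast
  ring

/-- Full-space sum of `⟨y⟩^{-s}`, `s > d`. -/
lemma tsum_pow_neg (hd : 1 ≤ d) {s : ℝ} (hs : (d:ℝ) < s) :
    Summable (fun y : Fin d → ℤ => (m y : ℝ) ^ (-s)) ∧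
    (∑' y : Fin d → ℤ, (m y : ℝ) ^ (-s)) ≤
      (2 * (d:ℝ) * 3 ^ d) * (1 + 1 / (s - (d:ℝ))) := by
  set r : ℝ := (d:ℝ) - s with hr
  have hrneg : r < 0 := by rw [hr]; linarith
  apply master_tsum hd (fun n => (n:ℝ) ^ (-s)) (fun n => Real.rpow_nonneg (Nat.cast_nonneg n) _)
  intro N hN
  have he : ∑ n ∈ Finset.Icc 1 N, (n:ℝ) ^ (d - 1) * (n:ℝ) ^ (-s) =
      ∑ n ∈ Finset.Icc 1 N, (n:ℝ) ^ (r - 1) := by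
    apply Finset.sum_congr rfl
    intro n hn
    rw [Finset.mem_Icc] at hn
    rw [pow_mul_rpow hd hn.1]
  rw [he]
  have h1 := sum_down hrneg 1 N le_rfl
  rw [Nat.cast_one, Real.one_rpow, mul_one] at h1
  have : 1 + 1 / (-r) = 1 + 1 / (s - (d:ℝ)) := by rw [hr]; ring_nf
  rw [this] at h1
  apply mul_le_mul_of_nonneg_left h1 (by positivity)

/-- Sum of `⟨y⟩^{-s}` over the box `2⟨y⟩ < R`, for `0 < s < d`. -/
lemma tsum_box (hd : 1 ≤ d) {s : ℝ} (hs0 : 0 < s) (hsd : s < (d:ℝ)) (R : ℕ) (hR : 1 ≤ R) :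
    Summable (fun y : Fin d → ℤ => if 2 * m y < R then (m y : ℝ) ^ (-s) else 0) ∧
    (∑' y : Fin d → ℤ, if 2 * m y < R then (m y : ℝ) ^ (-s) else 0) ≤
      (2 * (d:ℝ) * 3 ^ d) * (max 1 (1 / ((d:ℝ) - s)) * (R:ℝ) ^ ((d:ℝ) - s)) := by
  set r : ℝ := (d:ℝ) - s with hr
  have hrpos : 0 < r := by rw [hr]; linarith
  apply master_tsum hd (fun n => if 2 * n < R then (n:ℝ) ^ (-s) else 0)
    (fun n => by split <;> positivity)
  intro N hN
  apply mul_le_mul_of_nonneg_left _ (by positivity)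
  have he : ∑ n ∈ Finset.Icc 1 N, (n:ℝ) ^ (d - 1) * (if 2 * n < R then (n:ℝ) ^ (-s) else 0) =
      ∑ n ∈ (Finset.Icc 1 N).filter (fun n => 2 * n < R), (n:ℝ) ^ (r - 1) := by
    rw [Finset.sum_filter]
    apply Finset.sum_congr rfl
    intro n hn
    rw [Finset.mem_Icc] at hn
    split
    · rw [pow_mul_rpow hd hn.1]
    · rw [mul_zero]
  rw [he]
  calc ∑ n ∈ (Finset.Icc 1 N).filter (fun n => 2 * n < R), (n:ℝ) ^ (r - 1)
      ≤ ∑ n ∈ Finset.Icc 1 (R - 1), (n:ℝ) ^ (r - 1) := by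
        apply Finset.sum_le_sum_of_subset_of_nonneg
        · intro n hn
          rw [Finset.mem_filter, Finset.mem_Icc] at hn
          rw [Finset.mem_Icc]
          omega
        · intro n _ _
          exact Real.rpow_nonneg (Nat.cast_nonneg n) _
    _ ≤ max 1 (1 / r) * (R:ℝ) ^ r := sum_box hrpos R hR

/-- Tail sum of `⟨y⟩^{-s}` over `2⟨y⟩ ≥ R`, for `s > d`. -/
lemma tsum_tail (hd : 1 ≤ d) {s : ℝ} (hs : (d:ℝ) < s) (R : ℕ) (hR : 1 ≤ R) :
    Summable (fun y : Fin d → ℤ => if R ≤ 2 * m y then (m y : ℝ) ^ (-s) else 0) ∧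
    (∑' y : Fin d → ℤ, if R ≤ 2 * m y then (m y : ℝ) ^ (-s) else 0) ≤
      (2 * (d:ℝ) * 3 ^ d) * ((1 + 1 / (s - (d:ℝ))) * (2:ℝ) ^ (s - (d:ℝ)) * (R:ℝ) ^ ((d:ℝ) - s)) := by
  set r : ℝ := (d:ℝ) - s with hr
  have hrneg : r < 0 := by rw [hr]; linarith
  set M : ℕ := (R + 1) / 2 with hM
  have hM1 : 1 ≤ M := by omega
  have hM2 : R ≤ 2 * M := by omega
  apply master_tsum hd (fun n => if R ≤ 2 * n then (n:ℝ) ^ (-s) else 0)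
    (fun n => by split <;> positivity)
  intro N hN
  apply mul_le_mul_of_nonneg_left _ (by positivity)
  have he : ∑ n ∈ Finset.Icc 1 N, (n:ℝ) ^ (d - 1) * (if R ≤ 2 * n then (n:ℝ) ^ (-s) else 0) =
      ∑ n ∈ (Finset.Icc 1 N).filter (fun n => R ≤ 2 * n), (n:ℝ) ^ (r - 1) := by
    rw [Finset.sum_filter]
    apply Finset.sum_congr rfl
    intro n hn
    rw [Finset.mem_Icc] at hn
    split
    · rw [pow_mul_rpow hd hn.1]
    · rw [mul_zero]
  rw [he]
  have step1 : ∑ n ∈ (Finset.Icc 1 N).filter (fun n => R ≤ 2 * n), (n:ℝ) ^ (r - 1)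
      ≤ ∑ n ∈ Finset.Icc M N, (n:ℝ) ^ (r - 1) := by
    apply Finset.sum_le_sum_of_subset_of_nonneg
    · intro n hn
      rw [Finset.mem_filter, Finset.mem_Icc] at hn
      rw [Finset.mem_Icc]
      omega
    · intro n _ _
      exact Real.rpow_nonneg (Nat.cast_nonneg n) _
  have step2 : ∑ n ∈ Finset.Icc M N, (n:ℝ) ^ (r - 1) ≤ (1 + 1 / (-r)) * (M:ℝ) ^ r :=
    sum_down hrneg M N hM1
  have step3 : (M:ℝ) ^ r ≤ (2:ℝ) ^ (-r) * (R:ℝ) ^ r := by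
    have hR0 : (0:ℝ) < (R:ℝ) := by exact_mod_cast hR
    have hhalf : (R:ℝ) / 2 ≤ (M:ℝ) := by
      have : (R:ℝ) ≤ 2 * (M:ℝ) := by exact_mod_cast hM2
      linarith
    have h1 : (M:ℝ) ^ r ≤ ((R:ℝ) / 2) ^ r :=
      Real.rpow_le_rpow_of_nonpos (by positivity) hhalf hrneg.le
    have h2 : ((R:ℝ) / 2) ^ r = (2:ℝ) ^ (-r) * (R:ℝ) ^ r := by
      rw [Real.div_rpow hR0.le (by norm_num), Real.rpow_neg (by norm_num)]
      ring
    linarith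
  have hc : 0 ≤ 1 + 1 / (-r) := by
    have : 0 < -r := by linarith
    positivity
  calc ∑ n ∈ (Finset.Icc 1 N).filter (fun n => R ≤ 2 * n), (n:ℝ) ^ (r - 1)
      ≤ (1 + 1 / (-r)) * (M:ℝ) ^ r := le_trans step1 step2
    _ ≤ (1 + 1 / (-r)) * ((2:ℝ) ^ (-r) * (R:ℝ) ^ r) := mul_le_mul_of_nonneg_left step3 hc
    _ = (1 + 1 / (s - (d:ℝ))) * (2:ℝ) ^ (s - (d:ℝ)) * (R:ℝ) ^ r := by
        rw [hr]
        ring_nf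
    _ = _ := by rw [hr]

end Stmt11

namespace Stmt11

variable {d : ℕ}

lemma rpow_anti {u v : ℝ} (hu : 0 < u) (huv : u ≤ v) {s : ℝ} (hs : 0 ≤ s) :
    v ^ (-s) ≤ u ^ (-s) :=
  Real.rpow_le_rpow_of_nonpos hu huv (neg_nonpos.mpr hs)

lemma half_bound {u R : ℕ} (hu : R ≤ 2 * u) (hR : 1 ≤ R) {s : ℝ} (hs : 0 ≤ s) :
    (u:ℝ) ^ (-s) ≤ 2 ^ s * (R:ℝ) ^ (-s) := by
  have hR0 : (0:ℝ) < (R:ℝ) := by exact_mod_cast hR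
  have hhalf : (R:ℝ) / 2 ≤ (u:ℝ) := by
    have : (R:ℝ) ≤ 2 * (u:ℝ) := by exact_mod_cast hu
    linarith
  have h1 : (u:ℝ) ^ (-s) ≤ ((R:ℝ) / 2) ^ (-s) := rpow_anti (by positivity) hhalf hs
  have h2 : ((R:ℝ) / 2) ^ (-s) = 2 ^ s * (R:ℝ) ^ (-s) := by
    rw [Real.div_rpow hR0.le (by norm_num), Real.rpow_neg (by norm_num : (0:ℝ) ≤ 2),
      div_inv_eq_mul, mul_comm]
  linarith

/-- Transfer bound from the real bracket to the integer bracket. -/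
lemma abs_le_m_rpow (hd : 1 ≤ d) {f : (Fin d → ℤ) → ℝ} {s : ℝ} (hs : 0 ≤ s)
    (hf : ∀ x, |f x| ≤ zbra x ^ (-s)) (y : Fin d → ℤ) : |f y| ≤ (m y : ℝ) ^ (-s) := by
  have h1 : (0:ℝ) < (m y : ℝ) := by exact_mod_cast m_pos y
  exact le_trans (hf y) (rpow_anti h1 (m_le_zbra hd y) hs)

/-- Converting powers of `m x` into powers of `zbra x`. -/
lemma m_rpow_le_zbra (hd : 1 ≤ d) (x : Fin d → ℤ) {s : ℝ} (hs : 0 ≤ s) :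
    (m x : ℝ) ^ (-s) ≤ (d:ℝ) ^ (s / 2) * zbra x ^ (-s) := by
  have hd0 : (0:ℝ) < (d:ℝ) := by exact_mod_cast hd
  have hm0 : (0:ℝ) < (m x : ℝ) := by exact_mod_cast m_pos x
  have hz0 : (0:ℝ) < zbra x := lt_of_lt_of_le one_pos (le_max_right _ _)
  have hsd : (0:ℝ) < Real.sqrt d := Real.sqrt_pos.mpr hd0
  have h1 : (Real.sqrt d * (m x : ℝ)) ^ (-s) ≤ zbra x ^ (-s) :=
    rpow_anti hz0 (zbra_le_m hd x) hs
  have h2 : (Real.sqrt d * (m x : ℝ)) ^ (-s) = (Real.sqrt d) ^ (-s) * (m x : ℝ) ^ (-s) :=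
    Real.mul_rpow hsd.le hm0.le
  have h3 : (Real.sqrt d) ^ (s : ℝ) * (Real.sqrt d) ^ (-s) = 1 := by
    rw [← Real.rpow_add hsd]; simp
  have h4 : (Real.sqrt d) ^ (s:ℝ) = (d:ℝ) ^ (s / 2) := by
    rw [Real.sqrt_eq_rpow, ← Real.rpow_mul hd0.le]
    ring_nf
  calc (m x : ℝ) ^ (-s) = (Real.sqrt d) ^ (s:ℝ) * ((Real.sqrt d) ^ (-s) * (m x : ℝ) ^ (-s)) := by
        rw [← mul_assoc, h3, one_mul]
    _ = (Real.sqrt d) ^ (s:ℝ) * (Real.sqrt d * (m x : ℝ)) ^ (-s) := by rw [h2]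
    _ ≤ (Real.sqrt d) ^ (s:ℝ) * zbra x ^ (-s) := by
        apply mul_le_mul_of_nonneg_left h1 (Real.rpow_nonneg hsd.le _)
    _ = (d:ℝ) ^ (s / 2) * zbra x ^ (-s) := by rw [h4]

lemma summable_sub_left {F : (Fin d → ℤ) → ℝ} (x : Fin d → ℤ) (hF : Summable F) :
    Summable (fun y : Fin d → ℤ => F (x - y)) := by
  have h := hF.comp_injective (Equiv.subLeft x).injective
  simpa [Function.comp_def] using h

lemma tsum_sub_left {F : (Fin d → ℤ) → ℝ} (x : Fin d → ℤ) :
    (∑' y : Fin d → ℤ, F (x - y)) = ∑' z : Fin d → ℤ, F z := by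
  simpa using (Equiv.subLeft x).tsum_eq F

end Stmt11


open Stmt11

/-- Convolution estimate: if `|f(x)| ≤ ⟨x⟩^{−a}` and `|g(x)| ≤ ⟨x⟩^{−b}`
with `a ≥ b > 0`, then `f*g` converges absolutely with `|(f*g)(x)| ≤ C⟨x⟩^{−b}` when `a > d`,
and `|(f*g)(x)| ≤ C⟨x⟩^{d−(a+b)}` when `a < d` and `a + b > d`. -/
theorem stmt_11 (d : ℕ) (hd : 1 ≤ d) (a b : ℝ) (hab : b ≤ a) (hb : 0 < b) :
    ∃ C > (0 : ℝ), ∀ f g : (Fin d → ℤ) → ℝ,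
      (∀ x, |f x| ≤ zbra x ^ (-a)) → (∀ x, |g x| ≤ zbra x ^ (-b)) →
      (((d : ℝ) < a) → ∀ x : Fin d → ℤ,
          Summable (fun y : Fin d → ℤ => |f y * g (x - y)|) ∧
          |∑' y : Fin d → ℤ, f y * g (x - y)| ≤ C * zbra x ^ (-b)) ∧
      ((a < d ∧ (d : ℝ) < a + b) → ∀ x : Fin d → ℤ,
          Summable (fun y : Fin d → ℤ => |f y * g (x - y)|) ∧
          |∑' y : Fin d → ℤ, f y * g (x - y)| ≤ C * zbra x ^ ((d : ℝ) - (a + b))) := by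
  classical
  have ha : 0 < a := lt_of_lt_of_le hb hab
  have hd0 : (0:ℝ) < (d:ℝ) := by exact_mod_cast hd
  set Kd : ℝ := 2 * (d:ℝ) * 3 ^ d with hKd
  set Ta : ℝ := Kd * (1 + 1 / (a - (d:ℝ))) with hTadef
  set C1 : ℝ := (d:ℝ) ^ (b / 2) * (2 ^ b * (Ta + Ta)) with hC1def
  set ca : ℝ := Kd * max 1 (1 / ((d:ℝ) - a)) with hcadef
  set cb : ℝ := Kd * max 1 (1 / ((d:ℝ) - b)) with hcbdef
  set ct : ℝ := Kd * ((1 + 1 / (a + b - (d:ℝ))) * (2:ℝ) ^ (a + b - (d:ℝ))) with hctdef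
  set C2 : ℝ := (d:ℝ) ^ ((a + b - (d:ℝ)) / 2) * (2 ^ b * ca + 2 ^ a * cb + (ct + ct))
    with hC2def
  refine ⟨max 1 (max C1 C2), lt_of_lt_of_le one_pos (le_max_left _ _), ?_⟩
  intro f g hf hg
  have hfm : ∀ y, |f y| ≤ (m y : ℝ) ^ (-a) := abs_le_m_rpow hd ha.le hf
  have hgm : ∀ y, |g y| ≤ (m y : ℝ) ^ (-b) := abs_le_m_rpow hd hb.le hg
  have habs : ∀ x y : Fin d → ℤ,
      |f y * g (x - y)| ≤ (m y : ℝ) ^ (-a) * (m (x - y) : ℝ) ^ (-b) := by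
    intro x y
    rw [abs_mul]
    exact mul_le_mul (hfm y) (hgm (x - y)) (abs_nonneg _)
      (Real.rpow_nonneg (Nat.cast_nonneg _) _)
  constructor
  · -- Case (i) : a > d
    intro had x
    have hmx1 : 1 ≤ m x := one_le_m x
    have hmx0 : (0:ℝ) < (m x : ℝ) := by exact_mod_cast m_pos x
    obtain ⟨hSa, hTaB⟩ := tsum_pow_neg hd had
    have hSa' : Summable (fun y : Fin d → ℤ => (m (x - y) : ℝ) ^ (-a)) :=
      summable_sub_left x hSa
    have hTaB' : (∑' y : Fin d → ℤ, (m (x - y) : ℝ) ^ (-a)) ≤ Ta := by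
      rw [tsum_sub_left x (F := fun z => (m z : ℝ) ^ (-a))]
      exact hTaB
    have hTa0 : 0 ≤ Ta := by
      rw [hTadef, hKd]
      have h1 : 0 < a - (d:ℝ) := by linarith
      positivity
    have hpt : ∀ y, |f y * g (x - y)| ≤
        2 ^ b * (m x : ℝ) ^ (-b) * ((m y : ℝ) ^ (-a) + (m (x - y) : ℝ) ^ (-a)) := by
      intro y
      have h0 := habs x y
      have hAnn : (0:ℝ) ≤ (m y : ℝ) ^ (-a) := Real.rpow_nonneg (Nat.cast_nonneg _) _
      have hBnn : (0:ℝ) ≤ (m (x - y) : ℝ) ^ (-a) := Real.rpow_nonneg (Nat.cast_nonneg _) _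
      have hBnn' : (0:ℝ) ≤ (m (x - y) : ℝ) ^ (-b) := Real.rpow_nonneg (Nat.cast_nonneg _) _
      have hKnn : (0:ℝ) ≤ 2 ^ b * (m x : ℝ) ^ (-b) := by positivity
      have hmy0 : (0:ℝ) < (m y : ℝ) := by exact_mod_cast m_pos y
      have hmxy0 : (0:ℝ) < (m (x - y) : ℝ) := by exact_mod_cast m_pos (x - y)
      have htri := m_triangle x y
      rw [mul_add]
      rcases le_total (m (x - y)) (m y) with hc | hc
      · have h2my : m x ≤ 2 * m y := by omega
        have e1 : (m y : ℝ) ^ (-a) = (m y : ℝ) ^ (-(a - b)) * (m y : ℝ) ^ (-b) := by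
          rw [← Real.rpow_add hmy0]; congr 1; ring
        have e2 : (m y : ℝ) ^ (-(a - b)) ≤ (m (x - y) : ℝ) ^ (-(a - b)) :=
          rpow_anti hmxy0 (by exact_mod_cast hc) (by linarith)
        have e3 : (m y : ℝ) ^ (-b) ≤ 2 ^ b * (m x : ℝ) ^ (-b) := half_bound h2my hmx1 hb.le
        have e5 : (m (x - y) : ℝ) ^ (-(a - b)) * (m (x - y) : ℝ) ^ (-b) =
            (m (x - y) : ℝ) ^ (-a) := by
          rw [← Real.rpow_add hmxy0]; congr 1; ring
        have e4 : (m y : ℝ) ^ (-a) * (m (x - y) : ℝ) ^ (-b) ≤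
            2 ^ b * (m x : ℝ) ^ (-b) * (m (x - y) : ℝ) ^ (-a) := by
          calc (m y : ℝ) ^ (-a) * (m (x - y) : ℝ) ^ (-b)
              = ((m y : ℝ) ^ (-(a - b)) * (m y : ℝ) ^ (-b)) * (m (x - y) : ℝ) ^ (-b) := by
                rw [← e1]
            _ ≤ ((m (x - y) : ℝ) ^ (-(a - b)) * (2 ^ b * (m x : ℝ) ^ (-b))) *
                (m (x - y) : ℝ) ^ (-b) := by
                apply mul_le_mul_of_nonneg_right _ hBnn'
                exact mul_le_mul e2 e3 (Real.rpow_nonneg (Nat.cast_nonneg _) _)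
                  (Real.rpow_nonneg (Nat.cast_nonneg _) _)
            _ = (2 ^ b * (m x : ℝ) ^ (-b)) *
                ((m (x - y) : ℝ) ^ (-(a - b)) * (m (x - y) : ℝ) ^ (-b)) := by ring
            _ = 2 ^ b * (m x : ℝ) ^ (-b) * (m (x - y) : ℝ) ^ (-a) := by rw [e5]
        have hfin := le_trans h0 e4
        have hnn2 : 0 ≤ 2 ^ b * (m x : ℝ) ^ (-b) * (m y : ℝ) ^ (-a) := mul_nonneg hKnn hAnn
        linarith
      · have h2m : m x ≤ 2 * m (x - y) := by omega
        have e3 : (m (x - y) : ℝ) ^ (-b) ≤ 2 ^ b * (m x : ℝ) ^ (-b) :=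
          half_bound h2m hmx1 hb.le
        have e4 : (m y : ℝ) ^ (-a) * (m (x - y) : ℝ) ^ (-b) ≤
            2 ^ b * (m x : ℝ) ^ (-b) * (m y : ℝ) ^ (-a) := by
          calc (m y : ℝ) ^ (-a) * (m (x - y) : ℝ) ^ (-b)
              ≤ (m y : ℝ) ^ (-a) * (2 ^ b * (m x : ℝ) ^ (-b)) :=
                mul_le_mul_of_nonneg_left e3 hAnn
            _ = _ := by ring
        have hfin := le_trans h0 e4
        have hnn2 : 0 ≤ 2 ^ b * (m x : ℝ) ^ (-b) * (m (x - y) : ℝ) ^ (-a) :=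
          mul_nonneg hKnn hBnn
        linarith
    have hmaj : Summable (fun y : Fin d → ℤ =>
        2 ^ b * (m x : ℝ) ^ (-b) * ((m y : ℝ) ^ (-a) + (m (x - y) : ℝ) ^ (-a))) :=
      (hSa.add hSa').mul_left _
    have habs_sum : Summable (fun y : Fin d → ℤ => |f y * g (x - y)|) :=
      Summable.of_nonneg_of_le (fun y => abs_nonneg _) hpt hmaj
    refine ⟨habs_sum, ?_⟩
    have h1 : |∑' y : Fin d → ℤ, f y * g (x - y)| ≤ ∑' y : Fin d → ℤ, |f y * g (x - y)| := by
      have h := norm_tsum_le_tsum_norm (f := fun y : Fin d → ℤ => f y * g (x - y))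
        (by simp only [Real.norm_eq_abs]; exact habs_sum)
      simp only [Real.norm_eq_abs] at h
      exact h
    have h2 : (∑' y : Fin d → ℤ, |f y * g (x - y)|) ≤
        ∑' y : Fin d → ℤ, 2 ^ b * (m x : ℝ) ^ (-b) *
          ((m y : ℝ) ^ (-a) + (m (x - y) : ℝ) ^ (-a)) :=
      Summable.tsum_le_tsum hpt habs_sum hmaj
    have h3 : (∑' y : Fin d → ℤ, 2 ^ b * (m x : ℝ) ^ (-b) *
        ((m y : ℝ) ^ (-a) + (m (x - y) : ℝ) ^ (-a))) =
        2 ^ b * (m x : ℝ) ^ (-b) * ((∑' y : Fin d → ℤ, (m y : ℝ) ^ (-a)) +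
          ∑' y : Fin d → ℤ, (m (x - y) : ℝ) ^ (-a)) := by
      rw [tsum_mul_left, Summable.tsum_add hSa hSa']
    have h4 : 2 ^ b * (m x : ℝ) ^ (-b) * ((∑' y : Fin d → ℤ, (m y : ℝ) ^ (-a)) +
          ∑' y : Fin d → ℤ, (m (x - y) : ℝ) ^ (-a)) ≤
        2 ^ b * (m x : ℝ) ^ (-b) * (Ta + Ta) := by
      apply mul_le_mul_of_nonneg_left (add_le_add hTaB hTaB') (by positivity)
    have h5 : (m x : ℝ) ^ (-b) ≤ (d:ℝ) ^ (b / 2) * zbra x ^ (-b) := m_rpow_le_zbra hd x hb.le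
    have hzb : (0:ℝ) ≤ zbra x ^ (-b) :=
      Real.rpow_nonneg (le_trans zero_le_one (le_max_right _ _)) _
    have h6 : 2 ^ b * (m x : ℝ) ^ (-b) * (Ta + Ta) ≤ C1 * zbra x ^ (-b) := by
      rw [hC1def]
      calc 2 ^ b * (m x : ℝ) ^ (-b) * (Ta + Ta)
          ≤ 2 ^ b * ((d:ℝ) ^ (b / 2) * zbra x ^ (-b)) * (Ta + Ta) := by
            apply mul_le_mul_of_nonneg_right
              (mul_le_mul_of_nonneg_left h5 (by positivity)) (by linarith)
        _ = (d:ℝ) ^ (b / 2) * (2 ^ b * (Ta + Ta)) * zbra x ^ (-b) := by ring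
    have hC1C : C1 ≤ max 1 (max C1 C2) := le_trans (le_max_left _ _) (le_max_right _ _)
    calc |∑' y : Fin d → ℤ, f y * g (x - y)| ≤ ∑' y : Fin d → ℤ, |f y * g (x - y)| := h1
      _ ≤ _ := h2
      _ = _ := h3
      _ ≤ 2 ^ b * (m x : ℝ) ^ (-b) * (Ta + Ta) := h4
      _ ≤ C1 * zbra x ^ (-b) := h6
      _ ≤ max 1 (max C1 C2) * zbra x ^ (-b) := mul_le_mul_of_nonneg_right hC1C hzb
  · -- Case (ii) : a < d < a + b
    rintro ⟨hada, habd⟩ x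
    have hbd : b < (d:ℝ) := lt_of_le_of_lt hab hada
    have hmx1 : 1 ≤ m x := one_le_m x
    have hmx0 : (0:ℝ) < (m x : ℝ) := by exact_mod_cast m_pos x
    obtain ⟨hs1, ht1⟩ := tsum_box hd ha hada (m x) hmx1
    obtain ⟨hs2z, ht2z⟩ := tsum_box hd hb hbd (m x) hmx1
    obtain ⟨hs3, ht3z⟩ := tsum_tail hd habd (m x) hmx1
    have hs2 : Summable (fun y : Fin d → ℤ =>
        if 2 * m (x - y) < m x then (m (x - y) : ℝ) ^ (-b) else 0) :=
      summable_sub_left (F := fun z => if 2 * m z < m x then (m z : ℝ) ^ (-b) else 0) x hs2z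
    have hs4 : Summable (fun y : Fin d → ℤ =>
        if m x ≤ 2 * m (x - y) then (m (x - y) : ℝ) ^ (-(a + b)) else 0) :=
      summable_sub_left (F := fun z => if m x ≤ 2 * m z then (m z : ℝ) ^ (-(a + b)) else 0) x hs3
    have ht2 : (∑' y : Fin d → ℤ,
        if 2 * m (x - y) < m x then (m (x - y) : ℝ) ^ (-b) else 0) ≤
        Kd * (max 1 (1 / ((d:ℝ) - b)) * (m x : ℝ) ^ ((d:ℝ) - b)) := by
      rw [tsum_sub_left x (F := fun z => if 2 * m z < m x then (m z : ℝ) ^ (-b) else 0)]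
      exact ht2z
    have ht4 : (∑' y : Fin d → ℤ,
        if m x ≤ 2 * m (x - y) then (m (x - y) : ℝ) ^ (-(a + b)) else 0) ≤
        Kd * ((1 + 1 / (a + b - (d:ℝ))) * (2:ℝ) ^ (a + b - (d:ℝ)) *
          (m x : ℝ) ^ ((d:ℝ) - (a + b))) := by
      rw [tsum_sub_left x (F := fun z => if m x ≤ 2 * m z then (m z : ℝ) ^ (-(a + b)) else 0)]
      exact ht3z
    have hg1nn : ∀ y : Fin d → ℤ, (0:ℝ) ≤ (if 2 * m y < m x then (m y : ℝ) ^ (-a) else 0) := by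
      intro y; split
      · exact Real.rpow_nonneg (Nat.cast_nonneg _) _
      · exact le_rfl
    have hg2nn : ∀ y : Fin d → ℤ,
        (0:ℝ) ≤ (if 2 * m (x - y) < m x then (m (x - y) : ℝ) ^ (-b) else 0) := by
      intro y; split
      · exact Real.rpow_nonneg (Nat.cast_nonneg _) _
      · exact le_rfl
    have hg3nn : ∀ y : Fin d → ℤ,
        (0:ℝ) ≤ (if m x ≤ 2 * m y then (m y : ℝ) ^ (-(a + b)) else 0) := by
      intro y; split
      · exact Real.rpow_nonneg (Nat.cast_nonneg _) _
      · exact le_rfl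
    have hg4nn : ∀ y : Fin d → ℤ,
        (0:ℝ) ≤ (if m x ≤ 2 * m (x - y) then (m (x - y) : ℝ) ^ (-(a + b)) else 0) := by
      intro y; split
      · exact Real.rpow_nonneg (Nat.cast_nonneg _) _
      · exact le_rfl
    have hpt : ∀ y : Fin d → ℤ, |f y * g (x - y)| ≤
        2 ^ b * (m x : ℝ) ^ (-b) * (if 2 * m y < m x then (m y : ℝ) ^ (-a) else 0) +
        2 ^ a * (m x : ℝ) ^ (-a) *
          (if 2 * m (x - y) < m x then (m (x - y) : ℝ) ^ (-b) else 0) +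
        (if m x ≤ 2 * m y then (m y : ℝ) ^ (-(a + b)) else 0) +
        (if m x ≤ 2 * m (x - y) then (m (x - y) : ℝ) ^ (-(a + b)) else 0) := by
      intro y
      have h0 := habs x y
      have hmy0 : (0:ℝ) < (m y : ℝ) := by exact_mod_cast m_pos y
      have hmxy0 : (0:ℝ) < (m (x - y) : ℝ) := by exact_mod_cast m_pos (x - y)
      have hAnn : (0:ℝ) ≤ (m y : ℝ) ^ (-a) := Real.rpow_nonneg (Nat.cast_nonneg _) _
      have hBnn : (0:ℝ) ≤ (m (x - y) : ℝ) ^ (-b) := Real.rpow_nonneg (Nat.cast_nonneg _) _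
      have htri := m_triangle x y
      have hT1nn : (0:ℝ) ≤ 2 ^ b * (m x : ℝ) ^ (-b) *
          (if 2 * m y < m x then (m y : ℝ) ^ (-a) else 0) :=
        mul_nonneg (by positivity) (hg1nn y)
      have hT2nn : (0:ℝ) ≤ 2 ^ a * (m x : ℝ) ^ (-a) *
          (if 2 * m (x - y) < m x then (m (x - y) : ℝ) ^ (-b) else 0) :=
        mul_nonneg (by positivity) (hg2nn y)
      have hT3nn := hg3nn y
      have hT4nn := hg4nn y
      by_cases hc1 : 2 * m y < m x
      · have hc4 : m x ≤ 2 * m (x - y) := by omega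
        have e3 : (m (x - y) : ℝ) ^ (-b) ≤ 2 ^ b * (m x : ℝ) ^ (-b) :=
          half_bound hc4 hmx1 hb.le
        have key : |f y * g (x - y)| ≤ 2 ^ b * (m x : ℝ) ^ (-b) *
            (if 2 * m y < m x then (m y : ℝ) ^ (-a) else 0) := by
          rw [if_pos hc1]
          calc |f y * g (x - y)| ≤ (m y : ℝ) ^ (-a) * (m (x - y) : ℝ) ^ (-b) := h0
            _ ≤ (m y : ℝ) ^ (-a) * (2 ^ b * (m x : ℝ) ^ (-b)) :=
                mul_le_mul_of_nonneg_left e3 hAnn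
            _ = _ := by ring
        linarith
      · by_cases hc2 : 2 * m (x - y) < m x
        · have hc3 : m x ≤ 2 * m y := by omega
          have e3 : (m y : ℝ) ^ (-a) ≤ 2 ^ a * (m x : ℝ) ^ (-a) :=
            half_bound hc3 hmx1 ha.le
          have key : |f y * g (x - y)| ≤ 2 ^ a * (m x : ℝ) ^ (-a) *
              (if 2 * m (x - y) < m x then (m (x - y) : ℝ) ^ (-b) else 0) := by
            rw [if_pos hc2]
            calc |f y * g (x - y)| ≤ (m y : ℝ) ^ (-a) * (m (x - y) : ℝ) ^ (-b) := h0
              _ ≤ (2 ^ a * (m x : ℝ) ^ (-a)) * (m (x - y) : ℝ) ^ (-b) :=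
                  mul_le_mul_of_nonneg_right e3 hBnn
          linarith
        · have hd1 : m x ≤ 2 * m y := by omega
          have hd2 : m x ≤ 2 * m (x - y) := by omega
          rcases le_total (m y) (m (x - y)) with hc | hc
          · have key : |f y * g (x - y)| ≤
                (if m x ≤ 2 * m y then (m y : ℝ) ^ (-(a + b)) else 0) := by
              rw [if_pos hd1]
              calc |f y * g (x - y)| ≤ (m y : ℝ) ^ (-a) * (m (x - y) : ℝ) ^ (-b) := h0
                _ ≤ (m y : ℝ) ^ (-a) * (m y : ℝ) ^ (-b) :=
                    mul_le_mul_of_nonneg_left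
                      (rpow_anti hmy0 (by exact_mod_cast hc) hb.le) hAnn
                _ = (m y : ℝ) ^ (-(a + b)) := by
                    rw [← Real.rpow_add hmy0]; congr 1; ring
            linarith
          · have key : |f y * g (x - y)| ≤
                (if m x ≤ 2 * m (x - y) then (m (x - y) : ℝ) ^ (-(a + b)) else 0) := by
              rw [if_pos hd2]
              calc |f y * g (x - y)| ≤ (m y : ℝ) ^ (-a) * (m (x - y) : ℝ) ^ (-b) := h0
                _ ≤ (m (x - y) : ℝ) ^ (-a) * (m (x - y) : ℝ) ^ (-b) :=
                    mul_le_mul_of_nonneg_right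
                      (rpow_anti hmxy0 (by exact_mod_cast hc) ha.le) hBnn
                _ = (m (x - y) : ℝ) ^ (-(a + b)) := by
                    rw [← Real.rpow_add hmxy0]; congr 1; ring
            linarith
    have hmaj : Summable (fun y : Fin d → ℤ =>
        2 ^ b * (m x : ℝ) ^ (-b) * (if 2 * m y < m x then (m y : ℝ) ^ (-a) else 0) +
        2 ^ a * (m x : ℝ) ^ (-a) *
          (if 2 * m (x - y) < m x then (m (x - y) : ℝ) ^ (-b) else 0) +
        (if m x ≤ 2 * m y then (m y : ℝ) ^ (-(a + b)) else 0) +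
        (if m x ≤ 2 * m (x - y) then (m (x - y) : ℝ) ^ (-(a + b)) else 0)) :=
      (((hs1.mul_left _).add (hs2.mul_left _)).add hs3).add hs4
    have habs_sum : Summable (fun y : Fin d → ℤ => |f y * g (x - y)|) :=
      Summable.of_nonneg_of_le (fun y => abs_nonneg _) hpt hmaj
    refine ⟨habs_sum, ?_⟩
    have h1 : |∑' y : Fin d → ℤ, f y * g (x - y)| ≤
        ∑' y : Fin d → ℤ, |f y * g (x - y)| := by
      have h := norm_tsum_le_tsum_norm (f := fun y : Fin d → ℤ => f y * g (x - y))
        (by simp only [Real.norm_eq_abs]; exact habs_sum)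
      simp only [Real.norm_eq_abs] at h
      exact h
    have h2 := Summable.tsum_le_tsum hpt habs_sum hmaj
    have h3 : (∑' y : Fin d → ℤ,
        (2 ^ b * (m x : ℝ) ^ (-b) * (if 2 * m y < m x then (m y : ℝ) ^ (-a) else 0) +
        2 ^ a * (m x : ℝ) ^ (-a) *
          (if 2 * m (x - y) < m x then (m (x - y) : ℝ) ^ (-b) else 0) +
        (if m x ≤ 2 * m y then (m y : ℝ) ^ (-(a + b)) else 0) +
        (if m x ≤ 2 * m (x - y) then (m (x - y) : ℝ) ^ (-(a + b)) else 0))) =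
        2 ^ b * (m x : ℝ) ^ (-b) *
          (∑' y : Fin d → ℤ, if 2 * m y < m x then (m y : ℝ) ^ (-a) else 0) +
        2 ^ a * (m x : ℝ) ^ (-a) *
          (∑' y : Fin d → ℤ,
            if 2 * m (x - y) < m x then (m (x - y) : ℝ) ^ (-b) else 0) +
        (∑' y : Fin d → ℤ, if m x ≤ 2 * m y then (m y : ℝ) ^ (-(a + b)) else 0) +
        (∑' y : Fin d → ℤ,
          if m x ≤ 2 * m (x - y) then (m (x - y) : ℝ) ^ (-(a + b)) else 0) := by
      rw [Summable.tsum_add (((hs1.mul_left _).add (hs2.mul_left _)).add hs3) hs4,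
        Summable.tsum_add ((hs1.mul_left _).add (hs2.mul_left _)) hs3,
        Summable.tsum_add (hs1.mul_left _) (hs2.mul_left _), tsum_mul_left, tsum_mul_left]
    have hKd0 : (0:ℝ) ≤ Kd := by rw [hKd]; positivity
    have hca0 : (0:ℝ) ≤ ca := by
      rw [hcadef]
      exact mul_nonneg hKd0 (le_trans zero_le_one (le_max_left _ _))
    have hcb0 : (0:ℝ) ≤ cb := by
      rw [hcbdef]
      exact mul_nonneg hKd0 (le_trans zero_le_one (le_max_left _ _))
    have habd' : (0:ℝ) < a + b - (d:ℝ) := by linarith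
    have hct0 : (0:ℝ) ≤ ct := by
      rw [hctdef]
      apply mul_nonneg hKd0
      positivity
    have hb1 : (∑' y : Fin d → ℤ, if 2 * m y < m x then (m y : ℝ) ^ (-a) else 0) ≤
        ca * (m x : ℝ) ^ ((d:ℝ) - a) := by
      calc _ ≤ Kd * (max 1 (1 / ((d:ℝ) - a)) * (m x : ℝ) ^ ((d:ℝ) - a)) := ht1
        _ = ca * (m x : ℝ) ^ ((d:ℝ) - a) := by rw [hcadef]; ring
    have hb2 : (∑' y : Fin d → ℤ,
        if 2 * m (x - y) < m x then (m (x - y) : ℝ) ^ (-b) else 0) ≤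
        cb * (m x : ℝ) ^ ((d:ℝ) - b) := by
      calc _ ≤ Kd * (max 1 (1 / ((d:ℝ) - b)) * (m x : ℝ) ^ ((d:ℝ) - b)) := ht2
        _ = cb * (m x : ℝ) ^ ((d:ℝ) - b) := by rw [hcbdef]; ring
    have hb3 : (∑' y : Fin d → ℤ, if m x ≤ 2 * m y then (m y : ℝ) ^ (-(a + b)) else 0) ≤
        ct * (m x : ℝ) ^ ((d:ℝ) - (a + b)) := by
      calc _ ≤ Kd * ((1 + 1 / (a + b - (d:ℝ))) * (2:ℝ) ^ (a + b - (d:ℝ)) *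
            (m x : ℝ) ^ ((d:ℝ) - (a + b))) := ht3z
        _ = ct * (m x : ℝ) ^ ((d:ℝ) - (a + b)) := by rw [hctdef]; ring
    have hb4 : (∑' y : Fin d → ℤ,
        if m x ≤ 2 * m (x - y) then (m (x - y) : ℝ) ^ (-(a + b)) else 0) ≤
        ct * (m x : ℝ) ^ ((d:ℝ) - (a + b)) := by
      calc _ ≤ Kd * ((1 + 1 / (a + b - (d:ℝ))) * (2:ℝ) ^ (a + b - (d:ℝ)) *
            (m x : ℝ) ^ ((d:ℝ) - (a + b))) := ht4
        _ = ct * (m x : ℝ) ^ ((d:ℝ) - (a + b)) := by rw [hctdef]; ring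
    have hXc1 : 2 ^ b * (m x : ℝ) ^ (-b) * (ca * (m x : ℝ) ^ ((d:ℝ) - a)) =
        (2 ^ b * ca) * (m x : ℝ) ^ ((d:ℝ) - (a + b)) := by
      rw [show (m x : ℝ) ^ ((d:ℝ) - (a + b)) = (m x : ℝ) ^ (-b) * (m x : ℝ) ^ ((d:ℝ) - a) from
        by rw [← Real.rpow_add hmx0]; congr 1; ring]
      ring
    have hXc2 : 2 ^ a * (m x : ℝ) ^ (-a) * (cb * (m x : ℝ) ^ ((d:ℝ) - b)) =
        (2 ^ a * cb) * (m x : ℝ) ^ ((d:ℝ) - (a + b)) := by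
      rw [show (m x : ℝ) ^ ((d:ℝ) - (a + b)) = (m x : ℝ) ^ (-a) * (m x : ℝ) ^ ((d:ℝ) - b) from
        by rw [← Real.rpow_add hmx0]; congr 1; ring]
      ring
    have h4 : 2 ^ b * (m x : ℝ) ^ (-b) *
          (∑' y : Fin d → ℤ, if 2 * m y < m x then (m y : ℝ) ^ (-a) else 0) +
        2 ^ a * (m x : ℝ) ^ (-a) *
          (∑' y : Fin d → ℤ,
            if 2 * m (x - y) < m x then (m (x - y) : ℝ) ^ (-b) else 0) +
        (∑' y : Fin d → ℤ, if m x ≤ 2 * m y then (m y : ℝ) ^ (-(a + b)) else 0) +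
        (∑' y : Fin d → ℤ,
          if m x ≤ 2 * m (x - y) then (m (x - y) : ℝ) ^ (-(a + b)) else 0) ≤
        (2 ^ b * ca + 2 ^ a * cb + (ct + ct)) * (m x : ℝ) ^ ((d:ℝ) - (a + b)) := by
      have p1 : 2 ^ b * (m x : ℝ) ^ (-b) *
          (∑' y : Fin d → ℤ, if 2 * m y < m x then (m y : ℝ) ^ (-a) else 0) ≤
          (2 ^ b * ca) * (m x : ℝ) ^ ((d:ℝ) - (a + b)) := by
        rw [← hXc1]
        exact mul_le_mul_of_nonneg_left hb1 (by positivity)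
      have p2 : 2 ^ a * (m x : ℝ) ^ (-a) *
          (∑' y : Fin d → ℤ,
            if 2 * m (x - y) < m x then (m (x - y) : ℝ) ^ (-b) else 0) ≤
          (2 ^ a * cb) * (m x : ℝ) ^ ((d:ℝ) - (a + b)) := by
        rw [← hXc2]
        exact mul_le_mul_of_nonneg_left hb2 (by positivity)
      have expand : (2 ^ b * ca + 2 ^ a * cb + (ct + ct)) *
          (m x : ℝ) ^ ((d:ℝ) - (a + b)) =
          (2 ^ b * ca) * (m x : ℝ) ^ ((d:ℝ) - (a + b)) +
          (2 ^ a * cb) * (m x : ℝ) ^ ((d:ℝ) - (a + b)) +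
          ct * (m x : ℝ) ^ ((d:ℝ) - (a + b)) + ct * (m x : ℝ) ^ ((d:ℝ) - (a + b)) := by
        ring
      rw [expand]
      exact add_le_add (add_le_add (add_le_add p1 p2) hb3) hb4
    have h5 : (m x : ℝ) ^ ((d:ℝ) - (a + b)) ≤
        (d:ℝ) ^ ((a + b - (d:ℝ)) / 2) * zbra x ^ ((d:ℝ) - (a + b)) := by
      rw [show (d:ℝ) - (a + b) = -(a + b - (d:ℝ)) from by ring]
      exact m_rpow_le_zbra hd x (by linarith)
    have hS0 : (0:ℝ) ≤ 2 ^ b * ca + 2 ^ a * cb + (ct + ct) := by positivity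
    have hzE : (0:ℝ) ≤ zbra x ^ ((d:ℝ) - (a + b)) :=
      Real.rpow_nonneg (le_trans zero_le_one (le_max_right _ _)) _
    have h6 : (2 ^ b * ca + 2 ^ a * cb + (ct + ct)) * (m x : ℝ) ^ ((d:ℝ) - (a + b)) ≤
        C2 * zbra x ^ ((d:ℝ) - (a + b)) := by
      rw [hC2def]
      calc (2 ^ b * ca + 2 ^ a * cb + (ct + ct)) * (m x : ℝ) ^ ((d:ℝ) - (a + b))
          ≤ (2 ^ b * ca + 2 ^ a * cb + (ct + ct)) *
            ((d:ℝ) ^ ((a + b - (d:ℝ)) / 2) * zbra x ^ ((d:ℝ) - (a + b))) :=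
            mul_le_mul_of_nonneg_left h5 hS0
        _ = (d:ℝ) ^ ((a + b - (d:ℝ)) / 2) * (2 ^ b * ca + 2 ^ a * cb + (ct + ct)) *
            zbra x ^ ((d:ℝ) - (a + b)) := by ring
    have hC2C : C2 ≤ max 1 (max C1 C2) :=
      le_trans (le_max_right _ _) (le_max_right _ _)
    calc |∑' y : Fin d → ℤ, f y * g (x - y)|
        ≤ ∑' y : Fin d → ℤ, |f y * g (x - y)| := h1
      _ ≤ _ := h2
      _ = _ := h3
      _ ≤ (2 ^ b * ca + 2 ^ a * cb + (ct + ct)) * (m x : ℝ) ^ ((d:ℝ) - (a + b)) := h4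
      _ ≤ C2 * zbra x ^ ((d:ℝ) - (a + b)) := h6
      _ ≤ max 1 (max C1 C2) * zbra x ^ ((d:ℝ) - (a + b)) :=
          mul_le_mul_of_nonneg_right hC2C hzE
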